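/- Let V be a monoidal category admitting small products and let A be an object of V. Then A is very flat if and only if A is flat and for every small family (B_i)_{i∈I} of objects of V the canonical morphism ĵ : (∏_{i∈I} B_i) ⊗ A ⟶ ∏_{i∈I} (B_i ⊗ A), determined by π'_i ∘ ĵ = π_i ⊗ id_A for all i ∈ I (where π_i and π'_i are the product projections), is a monomorphism. -/

import Mathlib

open CategoryTheory Category MonoidalCategory Limits

universe w v u

/-- A family of morphisms `(f i : X ⟶ Y i)` is jointly monic if any parallel pair
equalized by all members of the family is equal. -/
def JointlyMonic {V : Type u} [Category.{v} V] {ι : Type w} {X : V} {Y : ι → V}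
    (f : ∀ i, X ⟶ Y i) : Prop :=
  ∀ ⦃W : V⦄ (g h : W ⟶ X), (∀ i, g ≫ f i = h ≫ f i) → g = h

/-- An object `A` is flat if the endofunctor `- ⊗ A` preserves monomorphisms. -/
def Flat {V : Type u} [Category.{v} V] [MonoidalCategory V] (A : V) : Prop :=
  ∀ ⦃X Y : V⦄ (f : X ⟶ Y), Mono f → Mono (f ⊗ₘ 𝟙 A)

/-- An object `A` is very flat if the endofunctor `- ⊗ A` preserves jointly monic families. -/
def VeryFlat {V : Type u} [Category.{v} V] [MonoidalCategory V] (A : V) : Prop :=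
  ∀ {ι : Type w} {B : V} {Bi : ι → V} (β : ∀ i, B ⟶ Bi i),
    JointlyMonic β → JointlyMonic (fun i => β i ⊗ₘ 𝟙 A)

/-- in a monoidal category with small products, an object `A` is very flat
iff it is flat and for every small family `(B i)` the canonical morphism
`(∏ᶜ B) ⊗ A ⟶ ∏ᶜ (B i ⊗ A)` (determined by `π'_i ∘ ĵ = π_i ⊗ id_A`) is a monomorphism. -/
theorem veryFlat_iff_flat_and_mono_prodComparison
    {V : Type u} [Category.{v} V] [MonoidalCategory V] [HasProducts.{v} V] (A : V) :
    VeryFlat.{v} A ↔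
      (Flat A ∧ ∀ {I : Type v} (B : I → V),
        Mono (Pi.lift (fun i => Pi.π B i ⊗ₘ 𝟙 A) :
          (∏ᶜ B) ⊗ A ⟶ ∏ᶜ (fun i => B i ⊗ A))) := by
  constructor
  · intro hv
    constructor
    · intro X Y f hf
      have hjm : JointlyMonic (fun _ : PUnit.{v+1} => f) := by
        intro W g h he
        exact (cancel_mono f).1 (he PUnit.unit)
      have := hv _ hjm
      constructor
      intro W g h he
      exact this g h fun _ => he
    · intro I B
      have hjm : JointlyMonic (Pi.π B) := by
        intro W g h he
        exact Pi.hom_ext g h he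
      have := hv _ hjm
      constructor
      intro W g h he
      refine this g h fun i => ?_
      have := congrArg (fun k => k ≫ Pi.π (fun i => B i ⊗ A) i) he
      simpa using this
  · rintro ⟨hflat, hmono⟩
    intro ι B Bi β hjm
    intro W g h he
    have hb : Mono (Pi.lift β) := by
      constructor
      intro Z u v huv
      refine hjm u v fun i => ?_
      have := congrArg (fun k => k ≫ Pi.π Bi i) huv
      simpa using this
    have hb' : Mono (Pi.lift β ⊗ₘ 𝟙 A) := hflat _ hb
    have key : g ≫ (Pi.lift β ⊗ₘ 𝟙 A) ≫ Pi.lift (fun i => Pi.π Bi i ⊗ₘ 𝟙 A)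
        = h ≫ (Pi.lift β ⊗ₘ 𝟙 A) ≫ Pi.lift (fun i => Pi.π Bi i ⊗ₘ 𝟙 A) := by
      refine Pi.hom_ext _ _ fun i => ?_
      have h1 : (Pi.lift β ▷ A) ≫ (Pi.π Bi i ▷ A) = β i ▷ A := by
        rw [← comp_whiskerRight, Pi.lift_π]
      simp only [tensorHom_id, assoc, limit.lift_π, Fan.mk_π_app, h1]
      simpa [tensorHom_id] using he i
    haveI := hmono Bi
    have := (cancel_mono (Pi.lift (fun i => Pi.π Bi i ⊗ₘ 𝟙 A))).1 (by simpa [← assoc] using key)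
    exact (cancel_mono (Pi.lift β ⊗ₘ 𝟙 A)).1 (by simpa [tensorHom_id] using this)
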